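/- Fix integers 1 ≤ k2 < k1 < n, 1 ≤ d ≤ n, 1 ≤ d^⊥ ≤ n, 1 ≤ s ≤ min{d, k1-k2}, 1 ≤ s^⊥ ≤ min{d^⊥, k1-k2}. Let N(d, s') be the number of nested linear code pairs C2 ⊊ C1 ⊆ F_q^n with dim(C1)=k1, dim(C2)=k2 and K_d(C1,C2) ≥ s', and N^⊥(d^⊥, s'') the analogous count with K_{d^⊥}(C2^⊥,C1^⊥) ≥ s''. If the total number of such nested pairs, N_1(n,k2)·N_1(n-k2,k1-k2), is strictly greater than N(d,s) + N^⊥(d^⊥,s^⊥), then there exists a nested pair C2 ⊊ C1 ⊆ F_q^n with dim(C1)=k1, dim(C2)=k2, M_s(C1,C2) > d and M_{s^⊥}(C2^⊥,C1^⊥) > d^⊥. -/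

import Mathlib

open Filter Topology

/-- The support size of a subcode `D ⊆ F^n`: number of coordinates where some
codeword of `D` is nonzero. -/
noncomputable def codeSupp {F : Type} [Field F] {n : ℕ}
    (D : Submodule F (Fin n → F)) : ℕ :=
  Set.ncard {i : Fin n | ∃ d ∈ D, d i ≠ 0}

/-- The `m`-th relative generalized Hamming weight of a nested pair `C2 ⊆ C1`. -/
noncomputable def RGHW {F : Type} [Field F] {n : ℕ}
    (m : ℕ) (C1 C2 : Submodule F (Fin n → F)) : ℕ :=
  sInf {w : ℕ | ∃ D : Submodule F (Fin n → F),
    D ≤ C1 ∧ Module.finrank F ↥D = m ∧ D ⊓ C2 = ⊥ ∧ codeSupp D = w}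

/-- The `m`-th generalized Hamming weight of a code `C`. -/
noncomputable def GHW {F : Type} [Field F] {n : ℕ}
    (m : ℕ) (C : Submodule F (Fin n → F)) : ℕ :=
  RGHW m C ⊥

/-- The dual code with respect to the standard bilinear form. -/
def dualCode {F : Type} [Field F] {n : ℕ}
    (C : Submodule F (Fin n → F)) : Submodule F (Fin n → F) where
  carrier := {y | ∀ x ∈ C, ∑ i, x i * y i = 0}
  add_mem' := by
    intro a b ha hb x hx
    simp only [Set.mem_setOf_eq] at *
    simp only [Pi.add_apply, mul_add, Finset.sum_add_distrib, ha x hx, hb x hx, add_zero]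
  zero_mem' := by
    intro x hx; simp
  smul_mem' := by
    intro c a ha x hx
    simp only [Set.mem_setOf_eq] at *
    simp only [Pi.smul_apply, smul_eq_mul, mul_left_comm, ← Finset.mul_sum, ha x hx, mul_zero]

/-- The subspace `V_I` of vectors supported on the coordinate set `I`. -/
def VI (F : Type) [Field F] {n : ℕ} (I : Finset (Fin n)) : Submodule F (Fin n → F) where
  carrier := {x | ∀ i, i ∉ I → x i = 0}
  add_mem' := by intro a b ha hb i hi; simp [ha i hi, hb i hi]
  zero_mem' := by intro i hi; rfl
  smul_mem' := by intro c a ha i hi; simp [ha i hi]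

/-- The relative dimension length profile `K_d(C1, C2)`. -/
noncomputable def RDLP {F : Type} [Field F] {n : ℕ}
    (d : ℕ) (C1 C2 : Submodule F (Fin n → F)) : ℕ :=
  sSup {k : ℕ | ∃ I : Finset (Fin n), I.card = d ∧
    Module.finrank F ↥(C1 ⊓ VI F I) - Module.finrank F ↥(C2 ⊓ VI F I) = k}

/-- The Gaussian binomial `N_1(w,u)` (number of `u`-dimensional subspaces of
`F_q^w`), as a rational number. -/
noncomputable def N1 (q w u : ℕ) : ℚ :=
  (∏ i ∈ Finset.range u, ((q : ℚ) ^ w - (q : ℚ) ^ i)) /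
    (∏ i ∈ Finset.range u, ((q : ℚ) ^ u - (q : ℚ) ^ i))


open Module Submodule

section Count

variable {F : Type} [Field F] [Fintype F]

instance submodFinite {V : Type} [AddCommGroup V] [Module F V] [Finite V] :
    Finite (Submodule F V) :=
  Finite.of_injective (fun W => (W : Set V)) SetLike.coe_injective

instance quotFinite {V : Type} [AddCommGroup V] [Module F V] [Finite V]
    (p : Submodule F V) : Finite (V ⧸ p) :=
  Finite.of_surjective p.mkQ p.mkQ_surjective

lemma natCard_mod (M : Type) [AddCommGroup M] [Module F M] [Finite M] :
    Nat.card M = Fintype.card F ^ finrank F M := by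
  letI := Fintype.ofFinite M
  rw [Nat.card_eq_fintype_card]
  exact card_eq_pow_finrank

lemma natCard_sigma {ι : Type} [Fintype ι] (f : ι → Type) [∀ i, Finite (f i)] :
    Nat.card (Σ i, f i) = ∑ i, Nat.card (f i) := by
  letI : ∀ i, Fintype (f i) := fun i => Fintype.ofFinite _
  simp [Nat.card_eq_fintype_card]

theorem card_grassmannian {V : Type} [AddCommGroup V] [Module F V] [FiniteDimensional F V]
    [Finite V] {k : ℕ} (hk : k ≤ finrank F V) :
    Nat.card {W : Submodule F V // finrank F W = k} *
        ∏ i ∈ Finset.range k, (Fintype.card F ^ k - Fintype.card F ^ i)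
      = ∏ i ∈ Finset.range k, (Fintype.card F ^ finrank F V - Fintype.card F ^ i) := by
  classical
  have hfin : ∀ v : Fin k → V, LinearIndependent F v →
      finrank F (span F (Set.range v)) = k := fun v hv => by
    rw [finrank_span_eq_card hv, Fintype.card_fin]
  let f : {v : Fin k → V // LinearIndependent F v} → {W : Submodule F V // finrank F W = k} :=
    fun v => ⟨span F (Set.range v.1), hfin v.1 v.2⟩
  have fiberEquiv : ∀ W : {W : Submodule F V // finrank F W = k},
      {v // f v = W} ≃ {w : Fin k → ↥W.1 // LinearIndependent F w} := by
    intro W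
    refine ⟨fun v => ⟨fun i => ⟨v.1.1 i, ?_⟩, ?_⟩, fun w => ⟨⟨fun i => (w.1 i : V),
      w.2.map' W.1.subtype (ker_subtype _)⟩, ?_⟩, fun v => ?_, fun w => ?_⟩
    · have h : span F (Set.range v.1.1) = W.1 := congrArg Subtype.val v.2
      exact h ▸ subset_span ⟨i, rfl⟩
    · exact LinearIndependent.of_comp W.1.subtype v.1.2
    · apply Subtype.ext
      show span F (Set.range fun i => ((w.1 i : V))) = W.1
      have hc : (fun i => ((w.1 i : V))) = (W.1.subtype : ↥W.1 →ₗ[F] V) ∘ w.1 := rfl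
      rw [hc, Set.range_comp, ← Submodule.map_span,
        w.2.span_eq_top_of_card_eq_finrank' (by rw [Fintype.card_fin, W.2]),
        Submodule.map_top, Submodule.range_subtype]
    · exact Subtype.ext (Subtype.ext rfl)
    · exact Subtype.ext (funext fun i => Subtype.ext rfl)
  letI := Fintype.ofFinite {W : Submodule F V // finrank F W = k}
  have h1 : Nat.card {v : Fin k → V // LinearIndependent F v}
      = ∑ W : {W : Submodule F V // finrank F W = k}, Nat.card {v // f v = W} := by
    rw [← natCard_sigma]
    exact (Nat.card_congr (Equiv.sigmaFiberEquiv f)).symm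
  have h2 : ∀ W : {W : Submodule F V // finrank F W = k},
      Nat.card {v // f v = W}
        = ∏ i ∈ Finset.range k, (Fintype.card F ^ k - Fintype.card F ^ i) := by
    intro W
    rw [Nat.card_congr (fiberEquiv W), card_linearIndependent (le_of_eq W.2.symm)]
    rw [← Fin.prod_univ_eq_prod_range]
    exact Finset.prod_congr rfl fun i _ => by rw [W.2]
  rw [card_linearIndependent hk] at h1
  rw [Finset.sum_congr rfl (fun W _ => h2 W), Finset.sum_const, Finset.card_univ,
    smul_eq_mul] at h1
  have h3 : Nat.card {W : Submodule F V // finrank F W = k}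
      = Fintype.card {W : Submodule F V // finrank F W = k} := Nat.card_eq_fintype_card
  rw [h3, ← h1]
  exact Fin.prod_univ_eq_prod_range
    (fun i => Fintype.card F ^ finrank F V - Fintype.card F ^ i) k


lemma finrank_map_mkQ_add {V : Type} [AddCommGroup V] [Module F V] [FiniteDimensional F V]
    (C2 C1 : Submodule F V) (h : C2 ≤ C1) :
    finrank F C1 = finrank F ↥(Submodule.map C2.mkQ C1) + finrank F C2 := by
  have h1 := LinearMap.finrank_range_add_finrank_ker (C2.mkQ.comp C1.subtype)
  rw [LinearMap.range_comp, Submodule.range_subtype, LinearMap.ker_comp,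
    Submodule.ker_mkQ] at h1
  rw [← h1, (Submodule.comapSubtypeEquivOfLe h).finrank_eq]

theorem card_pairs {V : Type} [AddCommGroup V] [Module F V] [FiniteDimensional F V]
    [Finite V] {k1 k2 : ℕ} (hk : k2 < k1) (hk1 : k1 ≤ finrank F V) :
    Nat.card {P : Submodule F V × Submodule F V //
        P.2 < P.1 ∧ finrank F P.1 = k1 ∧ finrank F P.2 = k2}
      * (∏ i ∈ Finset.range (k1 - k2), (Fintype.card F ^ (k1 - k2) - Fintype.card F ^ i))
      * ∏ i ∈ Finset.range k2, (Fintype.card F ^ k2 - Fintype.card F ^ i)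
    = (∏ i ∈ Finset.range (k1 - k2),
        (Fintype.card F ^ (finrank F V - k2) - Fintype.card F ^ i))
      * ∏ i ∈ Finset.range k2, (Fintype.card F ^ finrank F V - Fintype.card F ^ i) := by
  classical
  set q := Fintype.card F with hq
  let f : {P : Submodule F V × Submodule F V //
        P.2 < P.1 ∧ finrank F P.1 = k1 ∧ finrank F P.2 = k2}
      → {C : Submodule F V // finrank F C = k2} :=
    fun P => ⟨P.1.2, P.2.2.2⟩
  have fiberEquiv : ∀ C2 : {C : Submodule F V // finrank F C = k2},
      {P // f P = C2} ≃ {D : Submodule F (V ⧸ C2.1) // finrank F D = k1 - k2} := by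
    intro C2
    have hle : ∀ D : Submodule F (V ⧸ C2.1), C2.1 ≤ Submodule.comap C2.1.mkQ D := by
      intro D x hx
      have hx0 : C2.1.mkQ x = 0 := (Submodule.Quotient.mk_eq_zero _).mpr hx
      show C2.1.mkQ x ∈ D
      rw [hx0]
      exact D.zero_mem
    have hmc : ∀ D : Submodule F (V ⧸ C2.1),
        Submodule.map C2.1.mkQ (Submodule.comap C2.1.mkQ D) = D := by
      intro D
      rw [Submodule.map_comap_eq, Submodule.range_mkQ, top_inf_eq]
    have hfr : ∀ D : Submodule F (V ⧸ C2.1), finrank F D = k1 - k2 →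
        finrank F ↥(Submodule.comap C2.1.mkQ D) = k1 := by
      intro D hD
      have h2 := finrank_map_mkQ_add C2.1 (Submodule.comap C2.1.mkQ D) (hle D)
      rw [hmc D, hD, C2.2] at h2
      omega
    refine ⟨fun P => ⟨Submodule.map C2.1.mkQ P.1.1.1, ?_⟩,
      fun D => ⟨⟨(Submodule.comap C2.1.mkQ D.1, C2.1), ?_, hfr D.1 D.2, C2.2⟩,
        Subtype.ext rfl⟩, fun P => ?_, fun D => ?_⟩
    · have hC2 : P.1.1.2 = C2.1 := congrArg Subtype.val P.2
      have h2 := finrank_map_mkQ_add C2.1 P.1.1.1 (hC2 ▸ P.1.2.1.le)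
      rw [P.1.2.2.1, C2.2] at h2
      omega
    · refine lt_of_le_of_ne (hle D.1) fun h => ?_
      have h5 := hfr D.1 D.2
      have h6 : (C2.1 : Submodule F V) = Submodule.comap C2.1.mkQ D.1 := h
      rw [← h6, C2.2] at h5
      omega
    · apply Subtype.ext
      apply Subtype.ext
      have hC2 : P.1.1.2 = C2.1 := congrArg Subtype.val P.2
      have : Submodule.comap C2.1.mkQ (Submodule.map C2.1.mkQ P.1.1.1) = P.1.1.1 := by
        rw [Submodule.comap_map_eq, Submodule.ker_mkQ, ← hC2,
          sup_eq_left.mpr P.1.2.1.le]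
      exact Prod.ext this hC2.symm
    · exact Subtype.ext (hmc D.1)
  letI := Fintype.ofFinite {C : Submodule F V // finrank F C = k2}
  have h1 : Nat.card {P : Submodule F V × Submodule F V //
        P.2 < P.1 ∧ finrank F P.1 = k1 ∧ finrank F P.2 = k2}
      = ∑ C2 : {C : Submodule F V // finrank F C = k2}, Nat.card {P // f P = C2} := by
    rw [← natCard_sigma]
    exact (Nat.card_congr (Equiv.sigmaFiberEquiv f)).symm
  have hquot : ∀ C2 : {C : Submodule F V // finrank F C = k2},
      finrank F (V ⧸ C2.1) = finrank F V - k2 := by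
    intro C2
    have := Submodule.finrank_quotient_add_finrank C2.1
    rw [C2.2] at this
    omega
  have h2 : ∀ C2 : {C : Submodule F V // finrank F C = k2},
      Nat.card {P // f P = C2}
        * ∏ i ∈ Finset.range (k1 - k2), (q ^ (k1 - k2) - q ^ i)
      = ∏ i ∈ Finset.range (k1 - k2), (q ^ (finrank F V - k2) - q ^ i) := by
    intro C2
    rw [Nat.card_congr (fiberEquiv C2)]
    have := card_grassmannian (F := F) (V := V ⧸ C2.1)
      (k := k1 - k2) (by rw [hquot C2]; omega)
    rwa [hquot C2] at this
  have h3 : Nat.card {P : Submodule F V × Submodule F V //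
        P.2 < P.1 ∧ finrank F P.1 = k1 ∧ finrank F P.2 = k2}
      * ∏ i ∈ Finset.range (k1 - k2), (q ^ (k1 - k2) - q ^ i)
      = Nat.card {C : Submodule F V // finrank F C = k2}
        * ∏ i ∈ Finset.range (k1 - k2), (q ^ (finrank F V - k2) - q ^ i) := by
    rw [h1, Finset.sum_mul, Finset.sum_congr rfl (fun C2 _ => h2 C2), Finset.sum_const,
      Finset.card_univ, smul_eq_mul, Nat.card_eq_fintype_card]
  have h4 := card_grassmannian (F := F) (V := V) (k := k2) (le_trans (le_of_lt hk) hk1)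
  refine (congrArg (· * ∏ i ∈ Finset.range k2, (q ^ k2 - q ^ i)) h3).trans ?_
  calc Nat.card {C : Submodule F V // finrank F C = k2}
        * (∏ i ∈ Finset.range (k1 - k2), (q ^ (finrank F V - k2) - q ^ i))
        * ∏ i ∈ Finset.range k2, (q ^ k2 - q ^ i)
      = Nat.card {C : Submodule F V // finrank F C = k2}
          * (∏ i ∈ Finset.range k2, (q ^ k2 - q ^ i))
          * ∏ i ∈ Finset.range (k1 - k2), (q ^ (finrank F V - k2) - q ^ i) := by ring
    _ = (∏ i ∈ Finset.range k2, (q ^ finrank F V - q ^ i))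
          * ∏ i ∈ Finset.range (k1 - k2), (q ^ (finrank F V - k2) - q ^ i) := by
        exact congrArg (· * ∏ i ∈ Finset.range (k1 - k2), (q ^ (finrank F V - k2) - q ^ i)) h4
    _ = (∏ i ∈ Finset.range (k1 - k2), (q ^ (finrank F V - k2) - q ^ i))
          * ∏ i ∈ Finset.range k2, (q ^ finrank F V - q ^ i) := mul_comm _ _

end Count

section RGHWAux

variable {F : Type} [Field F] {n : ℕ}

set_option synthInstance.maxHeartbeats 1000000 in
set_option maxHeartbeats 1000000 in
lemma exists_compl_submodule {A B : Submodule F (Fin n → F)} (hBA : B ≤ A)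
    {s : ℕ} (hs : s + finrank F B ≤ finrank F A) :
    ∃ D : Submodule F (Fin n → F), D ≤ A ∧ finrank F D = s ∧ D ⊓ B = ⊥ := by
  obtain ⟨W, hW⟩ := Submodule.exists_isCompl (Submodule.comap A.subtype B)
  have hWr := Submodule.finrank_add_eq_of_isCompl hW
  have hcb : finrank F ↥(Submodule.comap A.subtype B) = finrank F B :=
    (Submodule.comapSubtypeEquivOfLe hBA).finrank_eq
  have hsW : s ≤ finrank F W := by omega
  obtain ⟨v, hv⟩ := exists_linearIndependent_of_le_finrank hsW
  let u : Fin s → (Fin n → F) := fun i => (((v i : ↥A) : Fin n → F))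
  have hu : LinearIndependent F u :=
    (hv.map_injOn W.subtype W.injective_subtype.injOn).map' A.subtype (Submodule.ker_subtype A)
  refine ⟨Submodule.span F (Set.range u), ?_, ?_, ?_⟩
  · rw [Submodule.span_le]
    rintro x ⟨i, rfl⟩
    exact ((v i : ↥A)).2
  · rw [finrank_span_eq_card hu, Fintype.card_fin]
  · rw [eq_bot_iff]
    intro x hx
    obtain ⟨hxD, hxB⟩ := Submodule.mem_inf.mp hx
    have hrange : Set.range u = A.subtype '' Set.range (W.subtype ∘ v) := by
      rw [← Set.range_comp]
      rfl
    rw [hrange, ← Submodule.map_span] at hxD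
    obtain ⟨a, haspan, rfl⟩ := Submodule.mem_map.mp hxD
    have haW : a ∈ W := by
      have hsp : Submodule.span F (Set.range (W.subtype ∘ v)) ≤ W := by
        rw [Submodule.span_le]
        rintro y ⟨i, rfl⟩
        exact (v i).2
      exact hsp haspan
    have haB : a ∈ Submodule.comap A.subtype B := hxB
    have hmem : a ∈ (Submodule.comap A.subtype B) ⊓ W := ⟨haB, haW⟩
    rw [hW.inf_eq_bot] at hmem
    rw [Submodule.mem_bot] at hmem
    rw [Submodule.mem_bot, hmem]
    simp

set_option synthInstance.maxHeartbeats 1000000 in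
set_option maxHeartbeats 1000000 in
lemma lt_RGHW_of_RDLP_lt {A B : Submodule F (Fin n → F)} (hBA : B ≤ A)
    {s d : ℕ} (hs : s + finrank F B ≤ finrank F A) (hdn : d ≤ n)
    (hR : RDLP d A B < s) : d < RGHW s A B := by
  by_contra hcon
  push_neg at hcon
  obtain ⟨D₀, hD₀A, hD₀r, hD₀B⟩ := exists_compl_submodule hBA hs
  have hne : {w : ℕ | ∃ D : Submodule F (Fin n → F),
      D ≤ A ∧ finrank F D = s ∧ D ⊓ B = ⊥ ∧ codeSupp D = w}.Nonempty :=
    ⟨codeSupp D₀, D₀, hD₀A, hD₀r, hD₀B, rfl⟩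
  obtain ⟨D, hDA, hDr, hDB, hDw⟩ := Nat.sInf_mem hne
  have hwd : codeSupp D ≤ d := by
    rw [hDw]
    exact hcon
  have hJfin : ({i : Fin n | ∃ x ∈ D, x i ≠ 0}).Finite := Set.toFinite _
  have hJcard : hJfin.toFinset.card = codeSupp D := by
    rw [codeSupp, Set.ncard_eq_toFinset_card _ hJfin]
  obtain ⟨I, hJI, hIcard⟩ := Finset.exists_superset_card_eq
    (show hJfin.toFinset.card ≤ d by omega) (by simpa using hdn)
  have hDV : D ≤ VI F I := by
    intro x hx
    show ∀ i, i ∉ I → x i = 0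
    intro i hiI
    by_contra hxi
    exact hiI (hJI (hJfin.mem_toFinset.mpr ⟨x, hx, hxi⟩))
  have hsub : D ⊔ (B ⊓ VI F I) ≤ A ⊓ VI F I :=
    sup_le (le_inf hDA hDV) (le_inf (inf_le_left.trans hBA) inf_le_right)
  have hd0 : D ⊓ (B ⊓ VI F I) = ⊥ := by
    have h5 : D ⊓ (B ⊓ VI F I) ≤ D ⊓ B := inf_le_inf_left D inf_le_left
    rw [hDB] at h5
    exact le_bot_iff.mp h5
  have hsum := Submodule.finrank_sup_add_finrank_inf_eq D (B ⊓ VI F I)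
  rw [hd0, finrank_bot, add_zero, hDr] at hsum
  have hmono := Submodule.finrank_mono hsub
  have hnV : finrank F (Fin n → F) = n := by
    rw [Module.finrank_fintype_fun_eq_card, Fintype.card_fin]
  have hbdd : ∀ k ∈ {k : ℕ | ∃ I : Finset (Fin n), I.card = d ∧
      finrank F ↥(A ⊓ VI F I) - finrank F ↥(B ⊓ VI F I) = k}, k ≤ n := by
    rintro k ⟨I', _, rfl⟩
    have h6 := Submodule.finrank_le (A ⊓ VI F I')
    omega
  have hmem : (finrank F ↥(A ⊓ VI F I) - finrank F ↥(B ⊓ VI F I)) ∈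
      {k : ℕ | ∃ I : Finset (Fin n), I.card = d ∧
        finrank F ↥(A ⊓ VI F I) - finrank F ↥(B ⊓ VI F I) = k} := ⟨I, hIcard, rfl⟩
  have hfinal : s ≤ RDLP d A B := by
    refine le_trans (show s ≤ finrank F ↥(A ⊓ VI F I) - finrank F ↥(B ⊓ VI F I) by omega) ?_
    exact le_csSup ⟨n, hbdd⟩ hmem
  omega

noncomputable def stdBilin (F : Type) [Field F] (n : ℕ) :
    LinearMap.BilinForm F (Fin n → F) :=
  LinearMap.mk₂ F (fun x y => ∑ i, x i * y i)
    (fun x x' y => by simp [add_mul, Finset.sum_add_distrib])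
    (fun c x y => by simp [Finset.mul_sum, mul_assoc])
    (fun x y y' => by simp [mul_add, Finset.sum_add_distrib])
    (fun c x y => by simp [Finset.mul_sum, mul_left_comm])

lemma stdBilin_apply (x y : Fin n → F) : stdBilin F n x y = ∑ i, x i * y i := rfl

lemma stdBilin_refl : (stdBilin F n).IsRefl := by
  intro x y h
  rw [stdBilin_apply] at h ⊢
  rw [← h]
  exact Finset.sum_congr rfl fun i _ => mul_comm _ _

lemma stdBilin_nondeg : (stdBilin F n).Nondegenerate := by
  refine (LinearMap.IsRefl.nondegenerate_iff_separatingLeft (B := stdBilin F n) fun x y h => stdBilin_refl x y h).mpr ?_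
  intro x hx
  funext i
  have h := hx (Pi.single i 1)
  rw [stdBilin_apply] at h
  simpa [Pi.single_apply, mul_ite, Finset.sum_ite_eq'] using h

lemma dualCode_eq_orthogonal (C : Submodule F (Fin n → F)) :
    dualCode C = (stdBilin F n).orthogonal C := rfl

lemma finrank_dualCode (C : Submodule F (Fin n → F)) :
    finrank F (dualCode C) = n - finrank F C := by
  rw [dualCode_eq_orthogonal,
    LinearMap.BilinForm.finrank_orthogonal stdBilin_nondeg,
    Module.finrank_fintype_fun_eq_card, Fintype.card_fin]

lemma dualCode_anti {C1 C2 : Submodule F (Fin n → F)} (h : C2 ≤ C1) :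
    dualCode C1 ≤ dualCode C2 := fun y hy x hx => hy x (h hx)

end RGHWAux

set_option synthInstance.maxHeartbeats 1000000
set_option maxHeartbeats 1000000

/-- Existence of a nested code pair with large relative generalized Hamming
weights on both the primary and the dual side: if the total number
`N_1(n,k2)·N_1(n-k2,k1-k2)` of nested pairs with the given dimensions exceeds
the number of pairs with `K_d(C1,C2) ≥ s` plus the number of pairs with
`K_{d^⊥}(C2^⊥,C1^⊥) ≥ s^⊥`, then some pair satisfies `M_s(C1,C2) > d` and
`M_{s^⊥}(C2^⊥,C1^⊥) > d^⊥`. -/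
theorem exists_pair_large_rghw {F : Type} [Field F] [Fintype F]
    {n k1 k2 d dp s sp : ℕ}
    (hk2 : 1 ≤ k2) (hk12 : k2 < k1) (hk1n : k1 < n)
    (hd1 : 1 ≤ d) (hdn : d ≤ n) (hdp1 : 1 ≤ dp) (hdpn : dp ≤ n)
    (hs1 : 1 ≤ s) (hs2 : s ≤ min d (k1 - k2))
    (hsp1 : 1 ≤ sp) (hsp2 : sp ≤ min dp (k1 - k2))
    (hcount :
      (Nat.card {P : Submodule F (Fin n → F) × Submodule F (Fin n → F) //
          P.2 < P.1 ∧ Module.finrank F ↥P.1 = k1 ∧ Module.finrank F ↥P.2 = k2 ∧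
          s ≤ RDLP d P.1 P.2} : ℚ) +
        (Nat.card {P : Submodule F (Fin n → F) × Submodule F (Fin n → F) //
          P.2 < P.1 ∧ Module.finrank F ↥P.1 = k1 ∧ Module.finrank F ↥P.2 = k2 ∧
          sp ≤ RDLP dp (dualCode P.2) (dualCode P.1)} : ℚ) <
      N1 (Fintype.card F) n k2 * N1 (Fintype.card F) (n - k2) (k1 - k2)) :
    ∃ C1 C2 : Submodule F (Fin n → F), C2 < C1 ∧
      Module.finrank F ↥C1 = k1 ∧ Module.finrank F ↥C2 = k2 ∧
      d < RGHW s C1 C2 ∧ dp < RGHW sp (dualCode C2) (dualCode C1) := by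
  classical
  by_contra hcon
  push_neg at hcon
  have hq : 1 < Fintype.card F := Fintype.one_lt_card
  set q := Fintype.card F with hqdef
  have hnV : finrank F (Fin n → F) = n := by
    rw [Module.finrank_fintype_fun_eq_card, Fintype.card_fin]
  have hs2' : s ≤ k1 - k2 := le_trans hs2 (min_le_right _ _)
  have hsp2' : sp ≤ k1 - k2 := le_trans hsp2 (min_le_right _ _)
  -- every admissible pair is bad on one of the two sides
  have hsplit : ∀ P : Submodule F (Fin n → F) × Submodule F (Fin n → F),
      P.2 < P.1 → finrank F P.1 = k1 → finrank F P.2 = k2 →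
      s ≤ RDLP d P.1 P.2 ∨ sp ≤ RDLP dp (dualCode P.2) (dualCode P.1) := by
    intro P hlt h1 h2
    by_contra hno
    push_neg at hno
    obtain ⟨hn1, hn2⟩ := hno
    have g1 : d < RGHW s P.1 P.2 :=
      lt_RGHW_of_RDLP_lt hlt.le (by rw [h1, h2]; omega) hdn hn1
    have g2 : dp < RGHW sp (dualCode P.2) (dualCode P.1) := by
      refine lt_RGHW_of_RDLP_lt (dualCode_anti hlt.le) ?_ hdpn hn2
      rw [finrank_dualCode, finrank_dualCode, h1, h2]
      omega
    exact (hcon P.1 P.2 hlt h1 h2 g1).not_gt g2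
  -- sets of pairs
  set SA : Set (Submodule F (Fin n → F) × Submodule F (Fin n → F)) :=
    {P | P.2 < P.1 ∧ finrank F P.1 = k1 ∧ finrank F P.2 = k2} with hSAdef
  set S1 : Set (Submodule F (Fin n → F) × Submodule F (Fin n → F)) :=
    {P | P.2 < P.1 ∧ finrank F P.1 = k1 ∧ finrank F P.2 = k2 ∧
      s ≤ RDLP d P.1 P.2} with hS1def
  set S2 : Set (Submodule F (Fin n → F) × Submodule F (Fin n → F)) :=
    {P | P.2 < P.1 ∧ finrank F P.1 = k1 ∧ finrank F P.2 = k2 ∧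
      sp ≤ RDLP dp (dualCode P.2) (dualCode P.1)} with hS2def
  have hsubset : SA ⊆ S1 ∪ S2 := by
    intro P hP
    obtain ⟨ha, hb, hc⟩ := hP
    rcases hsplit P ha hb hc with h | h
    · exact Or.inl ⟨ha, hb, hc, h⟩
    · exact Or.inr ⟨ha, hb, hc, h⟩
  -- cardinalities as set cardinalities
  have e0 : Nat.card {P : Submodule F (Fin n → F) × Submodule F (Fin n → F) //
      P.2 < P.1 ∧ finrank F P.1 = k1 ∧ finrank F P.2 = k2} = SA.ncard :=
    Nat.card_coe_set_eq SA
  have e1 : Nat.card {P : Submodule F (Fin n → F) × Submodule F (Fin n → F) //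
      P.2 < P.1 ∧ Module.finrank F ↥P.1 = k1 ∧ Module.finrank F ↥P.2 = k2 ∧
      s ≤ RDLP d P.1 P.2} = S1.ncard :=
    Nat.card_coe_set_eq S1
  have e2 : Nat.card {P : Submodule F (Fin n → F) × Submodule F (Fin n → F) //
      P.2 < P.1 ∧ Module.finrank F ↥P.1 = k1 ∧ Module.finrank F ↥P.2 = k2 ∧
      sp ≤ RDLP dp (dualCode P.2) (dualCode P.1)} = S2.ncard :=
    Nat.card_coe_set_eq S2
  have hcard_le : SA.ncard ≤ S1.ncard + S2.ncard :=
    le_trans (Set.ncard_le_ncard hsubset (Set.toFinite _)) (Set.ncard_union_le S1 S2)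
  -- exact count of SA
  have hcards := card_pairs (F := F) (V := Fin n → F) hk12 (by omega)
  rw [hnV] at hcards
  have hApos : ∀ u : ℕ, 0 < ∏ i ∈ Finset.range u, (q ^ u - q ^ i) := by
    intro u
    apply Finset.prod_pos
    intro i hi
    have h7 := Nat.pow_lt_pow_right hq (Finset.mem_range.mp hi)
    omega
  have hprodcast : ∀ w u : ℕ, u ≤ w →
      ((∏ i ∈ Finset.range u, (q ^ w - q ^ i) : ℕ) : ℚ)
        = ∏ i ∈ Finset.range u, ((q : ℚ) ^ w - (q : ℚ) ^ i) := by
    intro w u huw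
    rw [Nat.cast_prod]
    refine Finset.prod_congr rfl fun i hi => ?_
    have hiu : i < u := Finset.mem_range.mp hi
    have h8 : q ^ i ≤ q ^ w := Nat.pow_le_pow_right (by omega) (by omega)
    rw [Nat.cast_sub h8, Nat.cast_pow, Nat.cast_pow]
  have hN2 : N1 q n k2 = ((∏ i ∈ Finset.range k2, (q ^ n - q ^ i) : ℕ) : ℚ) /
      ((∏ i ∈ Finset.range k2, (q ^ k2 - q ^ i) : ℕ) : ℚ) := by
    rw [N1, hprodcast n k2 (by omega), hprodcast k2 k2 le_rfl]
  have hN1 : N1 q (n - k2) (k1 - k2)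
      = ((∏ i ∈ Finset.range (k1 - k2), (q ^ (n - k2) - q ^ i) : ℕ) : ℚ) /
        ((∏ i ∈ Finset.range (k1 - k2), (q ^ (k1 - k2) - q ^ i) : ℕ) : ℚ) := by
    rw [N1, hprodcast (n - k2) (k1 - k2) (by omega), hprodcast (k1 - k2) (k1 - k2) le_rfl]
  have hA1ne : ((∏ i ∈ Finset.range (k1 - k2), (q ^ (k1 - k2) - q ^ i) : ℕ) : ℚ) ≠ 0 :=
    Nat.cast_ne_zero.mpr (hApos (k1 - k2)).ne'
  have hA2ne : ((∏ i ∈ Finset.range k2, (q ^ k2 - q ^ i) : ℕ) : ℚ) ≠ 0 :=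
    Nat.cast_ne_zero.mpr (hApos k2).ne'
  have hkey : ((SA.ncard : ℕ) : ℚ) = N1 q n k2 * N1 q (n - k2) (k1 - k2) := by
    rw [← e0]
    have hc : ((Nat.card {P : Submodule F (Fin n → F) × Submodule F (Fin n → F) //
        P.2 < P.1 ∧ finrank F P.1 = k1 ∧ finrank F P.2 = k2} : ℕ) : ℚ)
        * ((∏ i ∈ Finset.range (k1 - k2), (q ^ (k1 - k2) - q ^ i) : ℕ) : ℚ)
        * ((∏ i ∈ Finset.range k2, (q ^ k2 - q ^ i) : ℕ) : ℚ)
        = ((∏ i ∈ Finset.range (k1 - k2), (q ^ (n - k2) - q ^ i) : ℕ) : ℚ)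
          * ((∏ i ∈ Finset.range k2, (q ^ n - q ^ i) : ℕ) : ℚ) := by
      exact_mod_cast congrArg (fun m : ℕ => (m : ℚ)) hcards
    rw [hN1, hN2, div_mul_div_comm, eq_div_iff (mul_ne_zero hA2ne hA1ne)]
    linear_combination hc
  rw [← hkey] at hcount
  rw [e1, e2] at hcount
  have hlt2 : S1.ncard + S2.ncard < SA.ncard := by exact_mod_cast hcount
  omega
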